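/- Let g(x) = binomial(x,2) + binomial(ℓ-x,2)(ℓ-s-2). If 2s ≤ ℓ-1, then for every integer x with 0 ≤ x ≤ ℓ, g(x) ≥ binomial(ℓ-1,2) - s. -/
import Mathlib

lemma two_choose_aux (n : ℕ) : 2 * n.choose 2 = n * (n - 1) := by
  induction n with
  | zero => rfl
  | succ k ih =>
    rw [Nat.choose_succ_succ, Nat.choose_one_right]
    cases k with
    | zero => rfl
    | succ j =>
      simp only [Nat.succ_sub_one] at *
      ring_nf
      ring_nf at ih
      omega

lemma consec_nonneg (n : ℤ) : 0 ≤ n * (n - 1) := by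
  rcases le_or_gt 1 n with h | h
  · nlinarith
  · have : n ≤ 0 := by omega
    nlinarith

lemma key_aux (s m x y : ℕ) (hs : s ≤ m + 1) (hxy : x + y = s + 2 + m) :
    (s + 1 + m) * (s + m) ≤ x * (x - 1) + y * (y - 1) * m + 2 * s := by
  cases x with
  | zero =>
    cases y with
    | zero => omega
    | succ c =>
      have hc : c = s + 1 + m := by omega
      subst hc
      simp only [Nat.succ_sub_one, Nat.zero_mul, Nat.zero_add]
      zify
      have h1 := consec_nonneg ((s : ℤ) + 1 + m)
      have h2 := consec_nonneg ((s : ℤ) + m)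
      nlinarith [mul_nonneg (by positivity : (0:ℤ) ≤ (s:ℤ)) h2,
        mul_nonneg (by omega : (0:ℤ) ≤ (m:ℤ) + 1 - s) h1]
  | succ a =>
    cases y with
    | zero =>
      have ha : a = s + 1 + m := by omega
      subst ha
      simp only [Nat.succ_sub_one]
      zify
      nlinarith [consec_nonneg ((s:ℤ) + 1 + m)]
    | succ b =>
      have hab : a + b = s + m := by omega
      simp only [Nat.succ_sub_one]
      zify
      have hab' : (a : ℤ) + b = (s : ℤ) + m := by exact_mod_cast hab
      have h1 := consec_nonneg ((b : ℤ) - 1)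
      have h2 := consec_nonneg (b : ℤ)
      nlinarith [mul_nonneg (by positivity : (0:ℤ) ≤ (s:ℤ)) h1,
        mul_nonneg (by omega : (0:ℤ) ≤ (m:ℤ) + 1 - s) h2]

theorem stmt_15 (s ℓ : ℕ) (hℓ3 : 3 ≤ ℓ) (hsℓ : 2 * s + 1 ≤ ℓ)
    (x : ℕ) (hx : x ≤ ℓ) :
    Nat.choose (ℓ - 1) 2 - s ≤
      Nat.choose x 2 + Nat.choose (ℓ - x) 2 * (ℓ - s - 2) := by
  obtain ⟨m, hm⟩ : ∃ m, ℓ = s + 2 + m := ⟨ℓ - s - 2, by omega⟩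
  obtain ⟨y, hy⟩ : ∃ y, x + y = ℓ := ⟨ℓ - x, by omega⟩
  rw [show ℓ - x = y by omega, show ℓ - s - 2 = m by omega,
    show ℓ - 1 = s + 1 + m by omega]
  rw [Nat.sub_le_iff_le_add]
  refine Nat.le_of_mul_le_mul_left ?_ (show 0 < 2 by norm_num)
  rw [Nat.mul_add, Nat.mul_add, two_choose_aux, two_choose_aux,
    ← Nat.mul_assoc, two_choose_aux]
  rw [show s + 1 + m - 1 = s + m by omega]
  exact key_aux s m x y (by omega) (by omega)
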